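/- Let (k₁, k₂) be positive integers, A : ℂ^{k₁} → ℂ^{k₁} an invertible linear map, B : ℂ^{k₂} → ℂ^{k₂} linear with ‖B‖ < ‖A^{−1}‖^{−1}, and set γ := 1 − ‖B‖‖A^{−1}‖ ∈ (0,1]. Let 0 ≤ γ₀ ≤ 1 and δ > 0 satisfy γ₀(1−γ) + 2δ(1+γ₀)‖A^{−1}‖ ≤ 1 and (γ₀‖B‖ + δ(1+γ₀)) ≤ γ₀(‖A^{−1}‖^{−1} − δ(1+γ₀)). Let g = (g₁, g₂) : D^k(R₀) → D^k(R₁) be holomorphic with g(0) = 0, d₀g = (A, B) block diagonal, and ‖d_w g − d₀g‖ ≤ δ on D^k(R₀). Let φ : V ⊆ D^{k₂}(R₁) → ℂ^{k₁} satisfy φ(0) = 0 and Lip φ ≤ γ₀. Then for each y in U := {y ∈ D^{k₂}(R₀) : g₂(L(y)) ⊆ V}, where L(y) := {(x,y) : |x| ≤ |y|}, the map Λ_y(x) := A^{−1}[φ(g₂(x,y)) − (g₁(x,y) − Ax)] sends the closed ball of radius |y| in ℂ^{k₁} into itself and is a contraction; hence it has a unique fixed point ψ(y), the resulting map ψ :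 U → ℂ^{k₁} satisfies Lip ψ ≤ γ₀ and g(graph ψ) ⊆ graph φ. -/

import Mathlib

open Metric

set_option maxHeartbeats 2000000

/-- backward graph transform (Theorem 6.4(1)). -/
theorem stmt10 (k₁ k₂ : ℕ) (hk₁ : 0 < k₁) (hk₂ : 0 < k₂)
    (A : EuclideanSpace ℂ (Fin k₁) ≃L[ℂ] EuclideanSpace ℂ (Fin k₁))
    (B : EuclideanSpace ℂ (Fin k₂) →L[ℂ] EuclideanSpace ℂ (Fin k₂))
    (hB : ‖B‖ < ‖(A.symm : EuclideanSpace ℂ (Fin k₁) →L[ℂ] EuclideanSpace ℂ (Fin k₁))‖⁻¹)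
    (γ γ₀ δ R₀ R₁ : ℝ)
    (hγdef : γ = 1 - ‖B‖ * ‖(A.symm : EuclideanSpace ℂ (Fin k₁) →L[ℂ] EuclideanSpace ℂ (Fin k₁))‖)
    (hγ₀0 : 0 ≤ γ₀) (hγ₀1 : γ₀ ≤ 1) (hδ : 0 < δ)
    (hcond_a : γ₀ * (1 - γ) +
      2 * δ * (1 + γ₀) * ‖(A.symm : EuclideanSpace ℂ (Fin k₁) →L[ℂ] EuclideanSpace ℂ (Fin k₁))‖ ≤ 1)
    (hcond_b : γ₀ * ‖B‖ + δ * (1 + γ₀) ≤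
      γ₀ * (‖(A.symm : EuclideanSpace ℂ (Fin k₁) →L[ℂ] EuclideanSpace ℂ (Fin k₁))‖⁻¹ - δ * (1 + γ₀)))
    (hR₀ : 0 < R₀) (hR₀₁ : R₀ ≤ R₁)
    (g : EuclideanSpace ℂ (Fin k₁) × EuclideanSpace ℂ (Fin k₂) →
      EuclideanSpace ℂ (Fin k₁) × EuclideanSpace ℂ (Fin k₂))
    (hgmaps : Set.MapsTo g (ball 0 R₀) (ball 0 R₁))
    (hg0 : g 0 = 0)
    (hghol : DifferentiableOn ℂ g (ball 0 R₀))
    (hdg0 : fderiv ℂ g 0 =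
      (A : EuclideanSpace ℂ (Fin k₁) →L[ℂ] EuclideanSpace ℂ (Fin k₁)).prodMap B)
    (hdg : ∀ w ∈ ball (0 : EuclideanSpace ℂ (Fin k₁) × EuclideanSpace ℂ (Fin k₂)) R₀,
      ‖fderiv ℂ g w -
        (A : EuclideanSpace ℂ (Fin k₁) →L[ℂ] EuclideanSpace ℂ (Fin k₁)).prodMap B‖ ≤ δ)
    (V : Set (EuclideanSpace ℂ (Fin k₂))) (hV : V ⊆ ball 0 R₁) (hV0 : (0 : EuclideanSpace ℂ (Fin k₂)) ∈ V)
    (φ : EuclideanSpace ℂ (Fin k₂) → EuclideanSpace ℂ (Fin k₁))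
    (hφ0 : φ 0 = 0)
    (hφLip : ∀ y ∈ V, ∀ y' ∈ V, ‖φ y - φ y'‖ ≤ γ₀ * ‖y - y'‖)
    (U : Set (EuclideanSpace ℂ (Fin k₂)))
    (hU : U = {y | ‖y‖ < R₀ ∧ ∀ x : EuclideanSpace ℂ (Fin k₁), ‖x‖ ≤ ‖y‖ → (g (x, y)).2 ∈ V})
    (Λ : EuclideanSpace ℂ (Fin k₂) → EuclideanSpace ℂ (Fin k₁) → EuclideanSpace ℂ (Fin k₁))
    (hΛ : ∀ y x, Λ y x = A.symm (φ ((g (x, y)).2) - ((g (x, y)).1 - A x))) :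
    (∀ y ∈ U, ∀ x : EuclideanSpace ℂ (Fin k₁), ‖x‖ ≤ ‖y‖ → ‖Λ y x‖ ≤ ‖y‖) ∧
    (∃ K : ℝ, K < 1 ∧ 0 ≤ K ∧ ∀ y ∈ U, ∀ x x' : EuclideanSpace ℂ (Fin k₁),
      ‖x‖ ≤ ‖y‖ → ‖x'‖ ≤ ‖y‖ → ‖Λ y x - Λ y x'‖ ≤ K * ‖x - x'‖) ∧
    (∃ ψ : EuclideanSpace ℂ (Fin k₂) → EuclideanSpace ℂ (Fin k₁),
      (∀ y ∈ U, ‖ψ y‖ ≤ ‖y‖ ∧ Λ y (ψ y) = ψ y ∧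
        (∀ x : EuclideanSpace ℂ (Fin k₁), ‖x‖ ≤ ‖y‖ → Λ y x = x → x = ψ y)) ∧
      (∀ y ∈ U, ∀ y' ∈ U, ‖ψ y - ψ y'‖ ≤ γ₀ * ‖y - y'‖) ∧
      (∀ y ∈ U, (g (ψ y, y)).2 ∈ V ∧ (g (ψ y, y)).1 = φ ((g (ψ y, y)).2))) := by
  classical
  set Ai : EuclideanSpace ℂ (Fin k₁) →L[ℂ] EuclideanSpace ℂ (Fin k₁) := (A.symm : EuclideanSpace ℂ (Fin k₁) →L[ℂ] EuclideanSpace ℂ (Fin k₁)) with hAidef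
  set L : EuclideanSpace ℂ (Fin k₁) × EuclideanSpace ℂ (Fin k₂) →L[ℂ] EuclideanSpace ℂ (Fin k₁) × EuclideanSpace ℂ (Fin k₂) := (A : EuclideanSpace ℂ (Fin k₁) →L[ℂ] EuclideanSpace ℂ (Fin k₁)).prodMap B with hLdef
  -- ‖A⁻¹‖ > 0
  have hnA : 0 < ‖Ai‖ := by
    have hv : (EuclideanSpace.single (⟨0, hk₁⟩ : Fin k₁) (1 : ℂ)) ≠ 0 := by
      intro h
      have := congrArg (fun v : EuclideanSpace ℂ (Fin k₁) => v (⟨0, hk₁⟩ : Fin k₁)) h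
      simp [EuclideanSpace.single] at this
    have hAine : Ai ≠ 0 := by
      intro h
      apply hv
      have : A.symm (EuclideanSpace.single (⟨0, hk₁⟩ : Fin k₁) (1 : ℂ)) = 0 := by
        rw [show A.symm (EuclideanSpace.single (⟨0, hk₁⟩ : Fin k₁) (1 : ℂ))
            = Ai (EuclideanSpace.single (⟨0, hk₁⟩ : Fin k₁) (1 : ℂ)) from rfl, h]
        rfl
      have := congrArg A this
      simpa using this
    rcases (norm_nonneg Ai).lt_or_eq with h | h
    · exact h
    · exact absurd ((ContinuousLinearMap.opNorm_zero_iff Ai).mp h.symm) hAine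
  have hAiinv : ‖Ai‖ * ‖Ai‖⁻¹ = 1 := mul_inv_cancel₀ hnA.ne'
  have hγ₀pos : 0 < γ₀ := by
    rcases hγ₀0.lt_or_eq with h | h
    · exact h
    · exfalso; rw [← h] at hcond_b; nlinarith [hcond_b]
  set K := ‖Ai‖ * (δ * (1 + γ₀)) with hKdef
  have hK0 : 0 < K := by
    apply mul_pos hnA; positivity
  have hsum : ‖Ai‖ * (γ₀ * ‖B‖ + δ * (1 + γ₀)) ≤ γ₀ * (1 - K) := by
    have h1 := mul_le_mul_of_nonneg_left hcond_b hnA.le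
    nlinarith [h1, hAiinv]
  have hK1 : K < 1 := by
    nlinarith [hsum, hK0, hγ₀0, hγ₀1, mul_nonneg (mul_nonneg hnA.le hγ₀0) (norm_nonneg B)]
  -- mean value estimate for g - L
  have hlip : ∀ w ∈ ball (0 : EuclideanSpace ℂ (Fin k₁) × EuclideanSpace ℂ (Fin k₂)) R₀, ∀ w' ∈ ball (0 : EuclideanSpace ℂ (Fin k₁) × EuclideanSpace ℂ (Fin k₂)) R₀,
      ‖(g w - L w) - (g w' - L w')‖ ≤ δ * ‖w - w'‖ := by
    intro w hw w' hw'
    have hdiff : ∀ z ∈ ball (0 : EuclideanSpace ℂ (Fin k₁) × EuclideanSpace ℂ (Fin k₂)) R₀, DifferentiableAt ℂ (fun u => g u - L u) z := by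
      intro z hz
      exact (hghol.differentiableAt (isOpen_ball.mem_nhds hz)).sub L.differentiableAt
    have hbound : ∀ z ∈ ball (0 : EuclideanSpace ℂ (Fin k₁) × EuclideanSpace ℂ (Fin k₂)) R₀, ‖fderiv ℂ (fun u => g u - L u) z‖ ≤ δ := by
      intro z hz
      have : fderiv ℂ (fun u => g u - L u) z = fderiv ℂ g z - L := by
        rw [fderiv_fun_sub (hghol.differentiableAt (isOpen_ball.mem_nhds hz)) L.differentiableAt,
          L.fderiv]
      rw [this]
      exact hdg z hz
    exact (convex_ball (0 : EuclideanSpace ℂ (Fin k₁) × EuclideanSpace ℂ (Fin k₂)) R₀).norm_image_sub_le_of_norm_fderiv_le hdiff hbound hw' hw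
  have hest1 : ∀ w ∈ ball (0 : EuclideanSpace ℂ (Fin k₁) × EuclideanSpace ℂ (Fin k₂)) R₀, ∀ w' ∈ ball (0 : EuclideanSpace ℂ (Fin k₁) × EuclideanSpace ℂ (Fin k₂)) R₀,
      ‖((g w).1 - A w.1) - ((g w').1 - A w'.1)‖ ≤ δ * ‖w - w'‖ := by
    intro w hw w' hw'
    have h := hlip w hw w' hw'
    have h2 := norm_fst_le ((g w - L w) - (g w' - L w'))
    have he : ((g w - L w) - (g w' - L w')).1 = ((g w).1 - A w.1) - ((g w').1 - A w'.1) := by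
      simp [hLdef, ContinuousLinearMap.coe_prodMap']
    rw [he] at h2
    exact h2.trans h
  have hest2 : ∀ w ∈ ball (0 : EuclideanSpace ℂ (Fin k₁) × EuclideanSpace ℂ (Fin k₂)) R₀, ∀ w' ∈ ball (0 : EuclideanSpace ℂ (Fin k₁) × EuclideanSpace ℂ (Fin k₂)) R₀,
      ‖((g w).2 - B w.2) - ((g w').2 - B w'.2)‖ ≤ δ * ‖w - w'‖ := by
    intro w hw w' hw'
    have h := hlip w hw w' hw'
    have h2 := norm_snd_le ((g w - L w) - (g w' - L w'))
    have he : ((g w - L w) - (g w' - L w')).2 = ((g w).2 - B w.2) - ((g w').2 - B w'.2) := by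
      simp [hLdef, ContinuousLinearMap.coe_prodMap']
    rw [he] at h2
    exact h2.trans h
  -- membership facts
  have hmem : ∀ y ∈ U, ∀ x : EuclideanSpace ℂ (Fin k₁), ‖x‖ ≤ ‖y‖ → ((x, y) : EuclideanSpace ℂ (Fin k₁) × EuclideanSpace ℂ (Fin k₂)) ∈ ball (0 : EuclideanSpace ℂ (Fin k₁) × EuclideanSpace ℂ (Fin k₂)) R₀ := by
    intro y hy x hx
    rw [hU] at hy
    rw [mem_ball_zero_iff, Prod.norm_def]
    exact max_lt (lt_of_le_of_lt hx hy.1) hy.1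
  have hinV : ∀ y ∈ U, ∀ x : EuclideanSpace ℂ (Fin k₁), ‖x‖ ≤ ‖y‖ → (g (x, y)).2 ∈ V := by
    intro y hy x hx
    rw [hU] at hy
    exact hy.2 x hx
  -- the key estimate
  have key : ∀ y ∈ U, ∀ y' ∈ U, ∀ x x' : EuclideanSpace ℂ (Fin k₁), ‖x‖ ≤ ‖y‖ → ‖x'‖ ≤ ‖y'‖ →
      ‖Λ y x - Λ y' x'‖ ≤ ‖Ai‖ * (γ₀ * (‖B‖ * ‖y - y'‖ + δ * max ‖x - x'‖ ‖y - y'‖)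
        + δ * max ‖x - x'‖ ‖y - y'‖) := by
    intro y hy y' hy' x x' hx hx'
    have hw := hmem y hy x hx
    have hw' := hmem y' hy' x' hx'
    set M := max ‖x - x'‖ ‖y - y'‖ with hMdef
    have hwdiff : ((x, y) : EuclideanSpace ℂ (Fin k₁) × EuclideanSpace ℂ (Fin k₂)) - (x', y') = (x - x', y - y') := rfl
    have hwnorm : ‖((x, y) : EuclideanSpace ℂ (Fin k₁) × EuclideanSpace ℂ (Fin k₂)) - (x', y')‖ = M := by
      rw [hwdiff, Prod.norm_def]
    have h1 : ‖((g (x, y)).1 - A x) - ((g (x', y')).1 - A x')‖ ≤ δ * M := by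
      have := hest1 _ hw _ hw'
      rwa [hwnorm] at this
    have h2 : ‖(g (x, y)).2 - (g (x', y')).2‖ ≤ ‖B‖ * ‖y - y'‖ + δ * M := by
      have h2' : ‖((g (x, y)).2 - B y) - ((g (x', y')).2 - B y')‖ ≤ δ * M := by
        have := hest2 _ hw _ hw'
        rwa [hwnorm] at this
      have hdec : (g (x, y)).2 - (g (x', y')).2
          = B (y - y') + (((g (x, y)).2 - B y) - ((g (x', y')).2 - B y')) := by
        rw [map_sub]; abel
      rw [hdec]
      calc ‖B (y - y') + (((g (x, y)).2 - B y) - ((g (x', y')).2 - B y'))‖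
          ≤ ‖B (y - y')‖ + ‖((g (x, y)).2 - B y) - ((g (x', y')).2 - B y')‖ := norm_add_le _ _
        _ ≤ ‖B‖ * ‖y - y'‖ + δ * M := add_le_add (B.le_opNorm _) h2'
    have hφd : ‖φ ((g (x, y)).2) - φ ((g (x', y')).2)‖
        ≤ γ₀ * (‖B‖ * ‖y - y'‖ + δ * M) := by
      have := hφLip _ (hinV y hy x hx) _ (hinV y' hy' x' hx')
      exact this.trans (mul_le_mul_of_nonneg_left h2 hγ₀0)
    rw [hΛ, hΛ]
    have hAs : (A.symm (φ ((g (x, y)).2) - ((g (x, y)).1 - A x)))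
        - (A.symm (φ ((g (x', y')).2) - ((g (x', y')).1 - A x')))
        = Ai ((φ ((g (x, y)).2) - φ ((g (x', y')).2))
          - (((g (x, y)).1 - A x) - ((g (x', y')).1 - A x'))) := by
      simp only [hAidef, ContinuousLinearEquiv.coe_coe, ← map_sub]
      congr 1
      abel
    rw [hAs]
    calc ‖Ai _‖ ≤ ‖Ai‖ * ‖(φ ((g (x, y)).2) - φ ((g (x', y')).2))
          - (((g (x, y)).1 - A x) - ((g (x', y')).1 - A x'))‖ := Ai.le_opNorm _
      _ ≤ ‖Ai‖ * (γ₀ * (‖B‖ * ‖y - y'‖ + δ * M) + δ * M) := by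
          apply mul_le_mul_of_nonneg_left _ (norm_nonneg Ai)
          exact (norm_sub_le _ _).trans (add_le_add hφd h1)
  -- 0 ∈ U and Λ 0 0 = 0
  have h0U : (0 : EuclideanSpace ℂ (Fin k₂)) ∈ U := by
    rw [hU]
    refine ⟨by simpa using hR₀, fun x hx => ?_⟩
    have hx0 : x = 0 := by simpa using norm_le_zero_iff.mp (by simpa using hx)
    subst hx0
    rw [show ((0 : EuclideanSpace ℂ (Fin k₁)), (0 : EuclideanSpace ℂ (Fin k₂))) = (0 : EuclideanSpace ℂ (Fin k₁) × EuclideanSpace ℂ (Fin k₂)) from rfl, hg0]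
    exact hV0
  have hΛ00 : Λ 0 0 = 0 := by
    rw [hΛ, show ((0 : EuclideanSpace ℂ (Fin k₁)), (0 : EuclideanSpace ℂ (Fin k₂))) = (0 : EuclideanSpace ℂ (Fin k₁) × EuclideanSpace ℂ (Fin k₂)) from rfl, hg0]
    simp [hφ0]
  -- part 1
  have part1 : ∀ y ∈ U, ∀ x : EuclideanSpace ℂ (Fin k₁), ‖x‖ ≤ ‖y‖ → ‖Λ y x‖ ≤ ‖y‖ := by
    intro y hy x hx
    have h := key y hy 0 h0U x 0 hx (by simp)
    rw [hΛ00, sub_zero, sub_zero, sub_zero, max_eq_right hx] at h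
    nlinarith [h, mul_le_mul_of_nonneg_right hsum (norm_nonneg y), norm_nonneg y,
      mul_nonneg (mul_nonneg hγ₀0 hK0.le) (norm_nonneg y), hγ₀1, hK0]
  -- contraction
  have hcontr : ∀ y ∈ U, ∀ x x' : EuclideanSpace ℂ (Fin k₁), ‖x‖ ≤ ‖y‖ → ‖x'‖ ≤ ‖y‖ →
      ‖Λ y x - Λ y x'‖ ≤ K * ‖x - x'‖ := by
    intro y hy x x' hx hx'
    have h := key y hy y hy x x' hx hx'
    rw [sub_self, norm_zero, max_eq_left (norm_nonneg _)] at h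
    calc ‖Λ y x - Λ y x'‖ ≤ ‖Ai‖ * (γ₀ * (‖B‖ * 0 + δ * ‖x - x'‖) + δ * ‖x - x'‖) := h
      _ = K * ‖x - x'‖ := by rw [hKdef]; ring
  -- existence of fixed points
  have hex : ∀ y ∈ U, ∃ x : EuclideanSpace ℂ (Fin k₁), ‖x‖ ≤ ‖y‖ ∧ Λ y x = x := by
    intro y hy
    haveI : CompleteSpace (closedBall (0 : EuclideanSpace ℂ (Fin k₁)) ‖y‖) :=
      (Metric.isClosed_closedBall (x := (0 : EuclideanSpace ℂ (Fin k₁))) (ε := ‖y‖)).completeSpace_coe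
    haveI : Nonempty (closedBall (0 : EuclideanSpace ℂ (Fin k₁)) ‖y‖) :=
      ⟨⟨0, mem_closedBall_self (norm_nonneg y)⟩⟩
    set f : closedBall (0 : EuclideanSpace ℂ (Fin k₁)) ‖y‖ → closedBall (0 : EuclideanSpace ℂ (Fin k₁)) ‖y‖ := fun x =>
      ⟨Λ y x, mem_closedBall_zero_iff.mpr
        (part1 y hy x (mem_closedBall_zero_iff.mp x.2))⟩ with hfdef
    have hLipf : LipschitzWith K.toNNReal f := by
      apply LipschitzWith.of_dist_le_mul
      intro a b
      have h := hcontr y hy a b (mem_closedBall_zero_iff.mp a.2) (mem_closedBall_zero_iff.mp b.2)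
      simpa [f, Subtype.dist_eq, dist_eq_norm, Real.coe_toNNReal _ hK0.le] using h
    have hCf : ContractingWith K.toNNReal f := by
      refine ⟨?_, hLipf⟩
      rw [← NNReal.coe_lt_coe, Real.coe_toNNReal _ hK0.le, NNReal.coe_one]
      exact hK1
    let x₀ := ContractingWith.fixedPoint f hCf
    refine ⟨x₀.1, mem_closedBall_zero_iff.mp x₀.2, ?_⟩
    exact congrArg Subtype.val hCf.fixedPoint_isFixedPt
  -- uniqueness of fixed points
  have huniq : ∀ y ∈ U, ∀ x x' : EuclideanSpace ℂ (Fin k₁), ‖x‖ ≤ ‖y‖ → ‖x'‖ ≤ ‖y‖ →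
      Λ y x = x → Λ y x' = x' → x = x' := by
    intro y hy x x' hx hx' hfx hfx'
    have h := hcontr y hy x x' hx hx'
    rw [hfx, hfx'] at h
    have : ‖x - x'‖ ≤ 0 := by nlinarith [norm_nonneg (x - x'), hK1]
    have : ‖x - x'‖ = 0 := le_antisymm this (norm_nonneg _)
    exact sub_eq_zero.mp (norm_eq_zero.mp this)
  -- define ψ
  set ψ : EuclideanSpace ℂ (Fin k₂) → EuclideanSpace ℂ (Fin k₁) := fun y =>
    if h : ∃ x : EuclideanSpace ℂ (Fin k₁), ‖x‖ ≤ ‖y‖ ∧ Λ y x = x then h.choose else 0 with hψdef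
  have hψspec : ∀ y ∈ U, ‖ψ y‖ ≤ ‖y‖ ∧ Λ y (ψ y) = ψ y := by
    intro y hy
    have h := hex y hy
    rw [hψdef]
    simp only [dif_pos h]
    exact h.choose_spec
  refine ⟨part1, ⟨K, hK1, hK0.le, fun y hy x x' hx hx' => hcontr y hy x x' hx hx'⟩,
    ⟨ψ, ?_, ?_, ?_⟩⟩
  · intro y hy
    obtain ⟨hb, hfix⟩ := hψspec y hy
    exact ⟨hb, hfix, fun x hx hfx => huniq y hy x (ψ y) hx hb hfx hfix⟩
  · intro y hy y' hy'
    obtain ⟨hb, hfix⟩ := hψspec y hy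
    obtain ⟨hb', hfix'⟩ := hψspec y' hy'
    have h := key y hy y' hy' (ψ y) (ψ y') hb hb'
    rw [hfix, hfix'] at h
    rcases le_total ‖ψ y - ψ y'‖ ‖y - y'‖ with hm | hm
    · rw [max_eq_right hm] at h
      nlinarith [h, mul_le_mul_of_nonneg_right hsum (norm_nonneg (y - y')),
        mul_nonneg (mul_nonneg hγ₀0 hK0.le) (norm_nonneg (y - y'))]
    · rw [max_eq_left hm] at h
      nlinarith [h, mul_le_mul_of_nonneg_right hsum (norm_nonneg (y - y')),
        mul_nonneg hK0.le (norm_nonneg (y - y')), hK1, norm_nonneg (y - y'),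
        norm_nonneg (ψ y - ψ y')]
  · intro y hy
    obtain ⟨hb, hfix⟩ := hψspec y hy
    refine ⟨hinV y hy (ψ y) hb, ?_⟩
    rw [hΛ] at hfix
    have h := congrArg A hfix
    rw [A.apply_symm_apply] at h
    have h2 : φ ((g (ψ y, y)).2) - ((g (ψ y, y)).1 - A (ψ y)) = A (ψ y) := h
    have h3 : (g (ψ y, y)).1 = φ ((g (ψ y, y)).2) := by
      have := sub_eq_iff_eq_add.mp h2
      -- this : φ c = A (ψ y) + (g₁ - A (ψ y))
      rw [this]; abel
    exact h3
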